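/- If Z ~ Gamma(α, β) with shape α > 0 and scale β > 0 and m a natural number, then E[Z^m (log Z)²] = β^m · α(α+1)⋯(α+m−1) · (ψ₁(α+m) + (ψ(α+m) + log β)²). -/

import Mathlib

open MeasureTheory

noncomputable def gammaPDF (α β z : ℝ) : ℝ :=
  z ^ (α - 1) * Real.exp (-z / β) / (Real.Gamma α * β ^ α)

noncomputable def digamma (x : ℝ) : ℝ := deriv (fun y : ℝ => Real.log (Real.Gamma y)) x

noncomputable def trigamma (x : ℝ) : ℝ := deriv digamma x

open MeasureTheory Real Set Filter Asymptotics
open scoped Topology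

noncomputable def G1 (s : ℝ) : ℝ :=
  ∫ t in Ioi (0:ℝ), t ^ (s - 1) * (Real.log t * Real.exp (-t))

noncomputable def G2 (s : ℝ) : ℝ :=
  ∫ t in Ioi (0:ℝ), t ^ (s - 1) * (Real.log t * (Real.log t * Real.exp (-t)))

namespace GammaAux2

noncomputable def f : ℝ → ℂ := fun t => (Real.exp (-t) : ℂ)
noncomputable def g : ℝ → ℂ := fun t => Real.log t • f t

lemma f_top (a : ℝ) : f =O[atTop] (· ^ (-a)) := by
  rw [← isBigO_norm_left]
  simp_rw [f, Complex.norm_real, isBigO_norm_left]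
  simpa only [neg_one_mul] using (isLittleO_exp_neg_mul_rpow_atTop zero_lt_one _).isBigO

lemma f_bot : f =O[𝓝[>] (0:ℝ)] (· ^ (-(0:ℝ))) := by
  simp_rw [neg_zero, rpow_zero]
  refine isBigO_const_of_tendsto (?_ : Tendsto _ _ (𝓝 (1 : ℂ))) one_ne_zero
  rw [(by simp : (1 : ℂ) = Real.exp (-0))]
  exact (Complex.continuous_ofReal.comp (Real.continuous_exp.comp continuous_neg)).continuousWithinAt

lemma f_loc : LocallyIntegrableOn f (Ioi (0:ℝ)) := by
  refine (Continuous.continuousOn ?_).locallyIntegrableOn measurableSet_Ioi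
  exact Complex.continuous_ofReal.comp (Real.continuous_exp.comp continuous_neg)

lemma g_top (a : ℝ) : g =O[atTop] (· ^ (-a)) :=
  isBigO_rpow_top_log_smul (lt_add_one a) (f_top (a+1))

lemma g_bot {b : ℝ} (hb : 0 < b) : g =O[𝓝[>] (0:ℝ)] (· ^ (-b)) :=
  isBigO_rpow_zero_log_smul hb f_bot

lemma g_cont : ContinuousOn g (Ioi (0:ℝ)) := by
  refine ContinuousOn.smul (f := Real.log) (g := f) ?_ ?_
  · exact Real.continuousOn_log.mono (fun x hx => ne_of_gt hx)
  · exact (Complex.continuous_ofReal.comp (Real.continuous_exp.comp continuous_neg)).continuousOn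

lemma g_loc : LocallyIntegrableOn g (Ioi (0:ℝ)) :=
  g_cont.locallyIntegrableOn measurableSet_Ioi

end GammaAux2

namespace GammaAux2

lemma key1 {x : ℝ} (hx : 0 < x) :
    MellinConvergent g ((x:ℂ)) ∧ HasDerivAt (mellin f) (mellin g (x:ℂ)) (x:ℂ) := by
  refine mellin_hasDerivAt_of_isBigO_rpow f_loc (f_top (x+1)) ?_ f_bot ?_ <;>
    simp [hx, lt_add_one]

lemma key2 {x : ℝ} (hx : 0 < x) :
    MellinConvergent (fun t => Real.log t • g t) (x:ℂ) ∧
      HasDerivAt (mellin g) (mellin (fun t => Real.log t • g t) (x:ℂ)) (x:ℂ) := by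
  refine mellin_hasDerivAt_of_isBigO_rpow g_loc (g_top (x+1)) ?_ (g_bot (half_pos hx)) ?_ <;>
    simp [hx, lt_add_one, half_lt_self]

lemma mellin_f_eq {x : ℝ} (hx : 0 < x) : mellin f (x:ℂ) = ((Real.Gamma x : ℝ) : ℂ) := by
  have : mellin f (x:ℂ) = Complex.GammaIntegral (x:ℂ) := by
    rw [Complex.GammaIntegral_eq_mellin]; rfl
  rw [this, ← Complex.Gamma_eq_integral (by simpa using hx), Complex.Gamma_ofReal]

lemma point1 {x : ℝ} {t : ℝ} (ht : t ∈ Ioi (0:ℝ)) :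
    (t:ℂ) ^ ((x:ℂ) - 1) • g t = ((t ^ (x-1) * (Real.log t * Real.exp (-t)) : ℝ) : ℂ) := by
  simp only [g, f, Complex.real_smul, smul_eq_mul]
  rw [show ((x:ℂ) - 1) = ((x - 1 : ℝ) : ℂ) by push_cast; ring,
    ← Complex.ofReal_cpow (le_of_lt ht)]
  push_cast
  ring

lemma point2 {x : ℝ} {t : ℝ} (ht : t ∈ Ioi (0:ℝ)) :
    (t:ℂ) ^ ((x:ℂ) - 1) • (Real.log t • g t)
      = ((t ^ (x-1) * (Real.log t * (Real.log t * Real.exp (-t))) : ℝ) : ℂ) := by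
  simp only [g, f, Complex.real_smul, smul_eq_mul]
  rw [show ((x:ℂ) - 1) = ((x - 1 : ℝ) : ℂ) by push_cast; ring,
    ← Complex.ofReal_cpow (le_of_lt ht)]
  push_cast
  ring

lemma mellin_g_eq (x : ℝ) : mellin g (x:ℂ) = ((G1 x : ℝ) : ℂ) := by
  rw [mellin, setIntegral_congr_fun measurableSet_Ioi (fun t ht => point1 ht), G1]
  exact integral_ofReal

lemma mellin_h_eq (x : ℝ) :
    mellin (fun t => Real.log t • g t) (x:ℂ) = ((G2 x : ℝ) : ℂ) := by
  rw [mellin, setIntegral_congr_fun measurableSet_Ioi (fun t ht => point2 ht), G2]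
  exact integral_ofReal

lemma hasDerivAt_Gamma {x : ℝ} (hx : 0 < x) : HasDerivAt Real.Gamma (G1 x) x := by
  have h := (key1 hx).2.real_of_complex
  rw [mellin_g_eq, Complex.ofReal_re] at h
  refine h.congr_of_eventuallyEq ?_
  filter_upwards [eventually_gt_nhds hx] with y hy
  rw [mellin_f_eq hy, Complex.ofReal_re]

lemma hasDerivAt_G1 {x : ℝ} (hx : 0 < x) : HasDerivAt G1 (G2 x) x := by
  have h := (key2 hx).2.real_of_complex
  rw [mellin_h_eq, Complex.ofReal_re] at h
  refine h.congr_of_eventuallyEq (Filter.Eventually.of_forall fun y => ?_)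
  show G1 y = (mellin g (y:ℂ)).re
  rw [mellin_g_eq, Complex.ofReal_re]

lemma I1 {x : ℝ} (hx : 0 < x) :
    IntegrableOn (fun t : ℝ => t ^ (x-1) * (Real.log t * Real.exp (-t))) (Ioi (0:ℝ)) := by
  have h := ((key1 hx).1).re
  refine h.congr ?_
  rw [Filter.EventuallyEq, ae_restrict_iff' measurableSet_Ioi]
  filter_upwards with t ht
  rw [point1 ht]
  simp [RCLike.re_to_complex, ← Complex.ofReal_neg, Complex.exp_ofReal_re]

lemma I2 {x : ℝ} (hx : 0 < x) :
    IntegrableOn (fun t : ℝ => t ^ (x-1) * (Real.log t * (Real.log t * Real.exp (-t))))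
      (Ioi (0:ℝ)) := by
  have h := ((key2 hx).1).re
  refine h.congr ?_
  rw [Filter.EventuallyEq, ae_restrict_iff' measurableSet_Ioi]
  filter_upwards with t ht
  rw [point2 ht]
  simp [RCLike.re_to_complex, ← Complex.ofReal_neg, Complex.exp_ofReal_re]

end GammaAux2


lemma digamma_eq {x : ℝ} (hx : 0 < x) : digamma x = G1 x / Real.Gamma x :=
  ((GammaAux2.hasDerivAt_Gamma hx).log (Real.Gamma_pos_of_pos hx).ne').deriv

lemma trigamma_eq {x : ℝ} (hx : 0 < x) :
    trigamma x = (G2 x * Real.Gamma x - G1 x * G1 x) / Real.Gamma x ^ 2 := by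
  have hne := (Real.Gamma_pos_of_pos hx).ne'
  have hd : HasDerivAt (fun y => G1 y / Real.Gamma y)
      ((G2 x * Real.Gamma x - G1 x * G1 x) / Real.Gamma x ^ 2) x :=
    (GammaAux2.hasDerivAt_G1 hx).div (GammaAux2.hasDerivAt_Gamma hx) hne
  have heq : digamma =ᶠ[𝓝 x] fun y => G1 y / Real.Gamma y := by
    filter_upwards [eventually_gt_nhds hx] with y hy
    exact digamma_eq hy
  rw [trigamma, heq.deriv_eq, hd.deriv]

lemma Gamma_add_nat' (α : ℝ) (hα : 0 < α) (m : ℕ) :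
    Real.Gamma (α + m) = Real.Gamma α * ∏ j ∈ Finset.range m, (α + j) := by
  induction m with
  | zero => simp
  | succ n ih =>
    have hpos : (0:ℝ) < α + n := add_pos_of_pos_of_nonneg hα (Nat.cast_nonneg n)
    have h : α + ((n+1 : ℕ) : ℝ) = (α + n) + 1 := by push_cast; ring
    rw [h, Real.Gamma_add_one hpos.ne', Finset.prod_range_succ, ih]
    ring

theorem gamma_pow_mul_sq_log_moment (α β : ℝ) (hα : 0 < α) (hβ : 0 < β) (m : ℕ) :
    ∫ z in Set.Ioi (0 : ℝ), z ^ m * Real.log z ^ 2 * gammaPDF α β z =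
      β ^ m * (∏ j ∈ Finset.range m, (α + j)) *
        (trigamma (α + m) + (digamma (α + m) + Real.log β) ^ 2) := by
  have hs : (0:ℝ) < α + m := add_pos_of_pos_of_nonneg hα (Nat.cast_nonneg m)
  have hΓα := (Real.Gamma_pos_of_pos hα).ne'
  have hΓs := (Real.Gamma_pos_of_pos hs).ne'
  set s : ℝ := α + m with hs_def
  set c : ℝ := β ^ m * β⁻¹ / Real.Gamma α with hc_def
  set Lβ : ℝ := Real.log β with hL_def
  have hsub := integral_comp_mul_left_Ioi
    (fun z => z ^ m * Real.log z ^ 2 * gammaPDF α β z) 0 hβ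
  rw [mul_zero] at hsub
  have h1 : ∫ z in Ioi (0:ℝ), z ^ m * Real.log z ^ 2 * gammaPDF α β z
      = β * ∫ t in Ioi (0:ℝ), ((β*t) ^ m * Real.log (β*t) ^ 2 * gammaPDF α β (β*t)) := by
    rw [hsub, smul_eq_mul, ← mul_assoc, mul_inv_cancel₀ hβ.ne', one_mul]
  have h2 : ∫ t in Ioi (0:ℝ), ((β*t) ^ m * Real.log (β*t) ^ 2 * gammaPDF α β (β*t))
      = ∫ t in Ioi (0:ℝ), c * (t ^ (s-1) * (Real.log t * (Real.log t * Real.exp (-t)))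
          + (2 * Lβ) * (t ^ (s-1) * (Real.log t * Real.exp (-t)))
          + Lβ ^ 2 * (Real.exp (-t) * t ^ (s-1))) := by
    refine setIntegral_congr_fun measurableSet_Ioi (fun t ht => ?_)
    have ht0 : (0:ℝ) < t := ht
    have e1 : Real.exp (-(β*t)/β) = Real.exp (-t) := by
      rw [neg_div, mul_div_cancel_left₀ _ hβ.ne']
    have e2 : (β*t) ^ (α-1) = β ^ α / β * t ^ (α-1) := by
      rw [Real.mul_rpow hβ.le ht0.le, Real.rpow_sub hβ, Real.rpow_one]
    have e3 : (β*t) ^ m = β ^ m * t ^ m := mul_pow β t m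
    have e4 : Real.log (β*t) = Lβ + Real.log t := Real.log_mul hβ.ne' ht0.ne'
    have e5 : t ^ (s-1) = t ^ m * t ^ (α-1) := by
      rw [← Real.rpow_natCast t m, ← Real.rpow_add ht0]
      congr 1
      rw [hs_def]; ring
    rw [gammaPDF, e1, e2, e3, e4, e5]
    have hβα : (0:ℝ) < β ^ α := Real.rpow_pos_of_pos hβ α
    rw [hc_def]
    field_simp
    ring
  have IA := GammaAux2.I2 hs
  have IB := (GammaAux2.I1 hs).const_mul (2 * Lβ)
  have IC := (Real.GammaIntegral_convergent hs).const_mul (Lβ ^ 2)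
  have h3 : ∫ t in Ioi (0:ℝ), c * (t ^ (s-1) * (Real.log t * (Real.log t * Real.exp (-t)))
          + (2 * Lβ) * (t ^ (s-1) * (Real.log t * Real.exp (-t)))
          + Lβ ^ 2 * (Real.exp (-t) * t ^ (s-1)))
      = c * (G2 s + 2 * Lβ * G1 s + Lβ ^ 2 * Real.Gamma s) := by
    have IAB : IntegrableOn (fun t : ℝ => t ^ (s-1) * (Real.log t * (Real.log t * Real.exp (-t)))
        + (2 * Lβ) * (t ^ (s-1) * (Real.log t * Real.exp (-t)))) (Ioi 0) := IA.add IB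
    rw [integral_const_mul, integral_add IAB IC, integral_add IA IB,
      integral_const_mul, integral_const_mul, ← G2, ← G1, ← Real.Gamma_eq_integral hs]
  have hprod : (∏ j ∈ Finset.range m, (α + (j:ℝ))) = Real.Gamma s / Real.Gamma α := by
    rw [hs_def, Gamma_add_nat' α hα m]
    field_simp
  rw [h1, h2, h3, hprod, digamma_eq hs, trigamma_eq hs, hc_def]
  field_simp [hβ.ne', hΓα, hΓs]
  ring
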